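/- Every real strictly positive definite 2n×2n matrix A admits a symplectic dilation of order 4n: there exists a matrix in Sp(4n) whose top-left 2n×2n block equals A. -/

import Mathlib

open Matrix

/-- The 2x2 matrix J₂ = [[0,-1],[1,0]]. -/
def J2 : Matrix (Fin 2) (Fin 2) ℝ := !![0, -1; 1, 0]

/-- The 2n x 2n block-diagonal matrix with n diagonal blocks J₂. -/
def J (n : ℕ) : Matrix (Fin (2*n)) (Fin (2*n)) ℝ :=
  Matrix.of fun i j =>
    if i.val = j.val + 1 ∧ j.val % 2 = 0 then 1
    else if j.val = i.val + 1 ∧ i.val % 2 = 0 then -1 else 0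

lemma J_apply (n : ℕ) (i j : Fin (2*n)) : _root_.J n i j =
    (if i.val = j.val + 1 ∧ j.val % 2 = 0 then 1
    else if j.val = i.val + 1 ∧ i.val % 2 = 0 then -1 else 0 : ℝ) := rfl

lemma Jtrans_neg (n : ℕ) : (_root_.J n)ᵀ = -(_root_.J n) := by
  ext i j
  simp only [transpose_apply, J_apply, Matrix.neg_apply]
  split_ifs <;> first | (exfalso; omega) | norm_num

lemma JmulJ (n : ℕ) : _root_.J n * _root_.J n = -1 := by
  ext i j
  rw [mul_apply]
  simp only [Matrix.neg_apply, one_apply, Fin.ext_iff]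
  rcases Nat.mod_two_eq_zero_or_one i.val with hi | hi
  · have hi1 : i.val + 1 < 2*n := by omega
    rw [Finset.sum_eq_single (⟨i.val+1, hi1⟩ : Fin (2*n))]
    · simp only [J_apply, Fin.val_mk, true_and, and_true]
      split_ifs <;> first | (exfalso; omega) | norm_num
    · intro k _ hk
      have hk' : k.val ≠ i.val + 1 := fun h => hk (Fin.ext h)
      simp only [J_apply]
      split_ifs <;> first | (exfalso; omega) | norm_num
    · simp
  · have hi1 : 1 ≤ i.val := by omega
    have hi2 : i.val - 1 < 2*n := by omega
    rw [Finset.sum_eq_single (⟨i.val-1, hi2⟩ : Fin (2*n))]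
    · simp only [J_apply, Fin.val_mk, true_and, and_true]
      split_ifs <;> first | (exfalso; omega) | norm_num
    · intro k _ hk
      have hk' : k.val ≠ i.val - 1 := fun h => hk (Fin.ext h)
      simp only [J_apply]
      split_ifs <;> first | (exfalso; omega) | norm_num
    · simp

lemma J2_mul_J2 : J2 * J2 = -1 := by
  ext i j
  fin_cases i <;> fin_cases j <;> simp [J2, mul_apply, Fin.sum_univ_two]

lemma J2_transpose : J2ᵀ = -J2 := by
  ext i j
  fin_cases i <;> fin_cases j <;> simp [J2]

lemma J2T_mul_J2 : J2ᵀ * J2 = 1 := by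
  rw [J2_transpose, neg_mul, J2_mul_J2, neg_neg]


section Pivot
variable {ι : Type*} [DecidableEq ι] [Fintype ι]

/-- If a skew matrix is nonzero, we can congruence it so a prescribed
off-diagonal entry becomes 1. -/
lemma pivot_congruence (S : Matrix ι ι ℝ) (hS : Sᵀ = -S) (hS0 : S ≠ 0)
    (a b : ι) (hab : a ≠ b) :
    ∃ P : Matrix ι ι ℝ, IsUnit P.det ∧ (Pᵀ * S * P) a b = 1 := by
  -- find nonzero entry
  obtain ⟨i, j, hij⟩ : ∃ i j, S i j ≠ 0 := by
    by_contra h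
    push_neg at h
    exact hS0 (by ext i j; exact h i j)
  have hSdiag : ∀ k, S k k = 0 := by
    intro k
    have := congrFun (congrFun hS k) k
    simp only [transpose_apply, Matrix.neg_apply] at this
    linarith
  have hij' : i ≠ j := by rintro rfl; exact hij (hSdiag i)
  -- build permutation with σ a = i, σ b = j
  set τ := Equiv.swap a i with hτ
  set j₁ := τ.symm j with hj₁
  have hj₁a : j₁ ≠ a := by
    intro h
    have : τ a = j := by rw [← h, hj₁]; simp
    rw [Equiv.swap_apply_left] at this
    exact hij' this
  set ρ := Equiv.swap b j₁ with hρ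
  set σ := ρ.trans τ with hσ
  have hσa : σ a = i := by
    have hρa : ρ a = a := Equiv.swap_apply_of_ne_of_ne hab (Ne.symm hj₁a)
    simp [hσ, Equiv.trans_apply, hρa, hτ]
  have hσb : σ b = j := by
    have hρb : ρ b = j₁ := Equiv.swap_apply_left _ _
    simp [hσ, Equiv.trans_apply, hρb, hj₁]
  -- scaling
  set c : ι → ℝ := fun k => if k = b then (S i j)⁻¹ else 1 with hc
  have hc0 : ∀ k, c k ≠ 0 := by
    intro k; rw [hc]; dsimp only; split_ifs
    · exact inv_ne_zero hij
    · exact one_ne_zero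
  set P : Matrix ι ι ℝ := Matrix.of fun r k => if r = σ k then c k else 0 with hP
  set Q : Matrix ι ι ℝ := Matrix.of fun k r => if r = σ k then (c k)⁻¹ else 0 with hQ
  have hQP : Q * P = 1 := by
    ext k l
    rw [mul_apply]
    rw [Finset.sum_eq_single (σ k)]
    · by_cases hkl : k = l
      · subst hkl
        simp [hP, hQ, hc0 k, one_apply]
      · have : σ k ≠ σ l := fun h => hkl (σ.injective h)
        simp [hP, hQ, this, one_apply, hkl]
    · intro r _ hr
      simp [hQ, hr, Ne.symm hr]
    · simp [hQ]
  have hPdet : IsUnit P.det := Matrix.isUnit_det_of_left_inverse hQP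
  refine ⟨P, hPdet, ?_⟩
  rw [mul_apply]
  rw [Finset.sum_eq_single (σ b)]
  · rw [mul_apply]
    rw [Finset.sum_eq_single (σ a)]
    · have h1 : P (σ a) a = 1 := by simp [hP, hc, hab]
      have h2 : P (σ b) b = (S i j)⁻¹ := by simp [hP, hc]
      rw [transpose_apply, h1, h2, hσa, hσb, one_mul]
      exact mul_inv_cancel₀ hij
    · intro r _ hr
      have h0 : P r a = 0 := by simp [hP, hr]
      rw [transpose_apply, h0, zero_mul]
    · simp
  · intro s _ hs
    have h0 : P s b = 0 := by simp [hP, hs]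
    rw [h0, mul_zero]
  · simp

end Pivot

lemma skew_canonical (n : ℕ) :
    ∀ (S : Matrix (Fin (2*n)) (Fin (2*n)) ℝ), Sᵀ = -S →
    ∃ (P : Matrix (Fin (2*n)) (Fin (2*n)) ℝ) (δ : Fin (2*n) → ℝ),
      IsUnit P.det ∧ (∀ i, δ i = 0 ∨ δ i = 1) ∧
      Pᵀ * S * P = diagonal δ * _root_.J n * diagonal δ := by
  induction n with
  | zero =>
    intro S hS
    refine ⟨1, fun _ => 0, by simp, fun i => Or.inl rfl, ?_⟩
    ext i j
    exact i.elim0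
  | succ n IH =>
    intro S hS
    by_cases hS0 : S = 0
    · refine ⟨1, fun _ => 0, by simp, fun i => Or.inl rfl, ?_⟩
      simp [hS0]
    · -- the reindexing equivalence
      have h2n : 2 + 2*n = 2*(n+1) := by omega
      set e : Fin 2 ⊕ Fin (2*n) ≃ Fin (2*(n+1)) :=
        finSumFinEquiv.trans (finCongr h2n) with he
      have he_l : ∀ r : Fin 2, (e (Sum.inl r)).val = r.val := by
        intro r; simp [he]
      have he_r : ∀ k : Fin (2*n), (e (Sum.inr k)).val = 2 + k.val := by
        intro k; simp [he]; omega
      have hab : e (Sum.inl 1) ≠ e (Sum.inl 0) := by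
        intro h
        have h' := congrArg Fin.val h
        rw [he_l, he_l] at h'
        simp at h'
      -- pivot step
      obtain ⟨P₁, hP₁det, hpiv⟩ := pivot_congruence S hS hS0 _ _ hab
      set S₁ := P₁ᵀ * S * P₁ with hS₁def
      have hS₁skew : S₁ᵀ = -S₁ := by
        rw [hS₁def]
        simp [transpose_mul, hS, Matrix.mul_assoc]
      set Sh := S₁.submatrix e e with hShdef
      have hShskew : Shᵀ = -Sh := by
        rw [hShdef, transpose_submatrix, hS₁skew]
        ext x y
        simp
      -- blocks
      set B₁ := Sh.toBlocks₁₂ with hB₁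
      set D₁ := Sh.toBlocks₂₂ with hD₁
      have hskew_entry : ∀ x y, Sh y x = - Sh x y := by
        intro x y
        have := congrFun (congrFun hShskew x) y
        simpa using this
      have h00 : Sh (Sum.inl 0) (Sum.inl 0) = 0 := by
        have := hskew_entry (Sum.inl 0) (Sum.inl 0); linarith
      have h11 : Sh (Sum.inl 1) (Sum.inl 1) = 0 := by
        have := hskew_entry (Sum.inl 1) (Sum.inl 1); linarith
      have h10 : Sh (Sum.inl 1) (Sum.inl 0) = 1 := hpiv
      have h01 : Sh (Sum.inl 0) (Sum.inl 1) = -1 := by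
        rw [hskew_entry (Sum.inl 1) (Sum.inl 0), h10]
      have hA₁ : Sh.toBlocks₁₁ = J2 := by
        ext r s
        fin_cases r <;> fin_cases s <;>
          first | exact h00 | exact h01 | exact h10 | exact h11
      have hC₁ : Sh.toBlocks₂₁ = -B₁ᵀ := by
        ext k r
        have : Sh (Sum.inr k) (Sum.inl r) = -Sh (Sum.inl r) (Sum.inr k) :=
          hskew_entry (Sum.inl r) (Sum.inr k)
        exact this
      set X := J2 * B₁ with hX
      set P₂ : Matrix (Fin 2 ⊕ Fin (2*n)) (Fin 2 ⊕ Fin (2*n)) ℝ :=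
        fromBlocks 1 X 0 1 with hP₂
      set S' := Xᵀ * B₁ + D₁ with hS'
      have hTR : J2 * X + B₁ = 0 := by
        rw [hX, ← Matrix.mul_assoc, J2_mul_J2]
        simp
      have hBL : Xᵀ * J2 + -B₁ᵀ = 0 := by
        rw [hX, transpose_mul, Matrix.mul_assoc, J2T_mul_J2]
        simp
      have hR : P₂ᵀ * Sh * P₂ = fromBlocks J2 0 0 S' := by
        conv_lhs => rw [← fromBlocks_toBlocks Sh, hA₁, hC₁, ← hB₁, ← hD₁]
        rw [hP₂, fromBlocks_transpose, transpose_one, transpose_zero,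
          fromBlocks_multiply, fromBlocks_multiply]
        rw [fromBlocks_inj]
        simp only [transpose_one, Matrix.one_mul, Matrix.mul_one, Matrix.zero_mul,
          Matrix.mul_zero, add_zero, zero_add]
        refine ⟨trivial, hTR, hBL, ?_⟩
        rw [hBL, Matrix.zero_mul, zero_add, hS']
      have hD₁T : D₁ᵀ = -D₁ := by
        ext k l
        exact hskew_entry (Sum.inr k) (Sum.inr l)
      have hS'skew : S'ᵀ = -S' := by
        rw [hS']
        simp only [transpose_add, transpose_mul, transpose_transpose, hD₁T, hX,
          J2_transpose, transpose_neg, Matrix.neg_mul, Matrix.mul_neg, neg_neg,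
          Matrix.mul_assoc, neg_add_rev]
        abel
      obtain ⟨P', δ', hP'det, hδ', hP'⟩ := IH S' hS'skew
      set P₃ : Matrix (Fin 2 ⊕ Fin (2*n)) (Fin 2 ⊕ Fin (2*n)) ℝ :=
        fromBlocks 1 0 0 P' with hP₃
      have hQs : (P₂ * P₃)ᵀ * Sh * (P₂ * P₃)
          = fromBlocks J2 0 0 (diagonal δ' * _root_.J n * diagonal δ') := by
        have : (P₂ * P₃)ᵀ * Sh * (P₂ * P₃) = P₃ᵀ * (P₂ᵀ * Sh * P₂) * P₃ := by
          rw [transpose_mul]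
          simp only [Matrix.mul_assoc]
        rw [this, hR, hP₃, fromBlocks_transpose, transpose_one, transpose_zero,
          fromBlocks_multiply, fromBlocks_multiply]
        simp only [Matrix.one_mul, Matrix.mul_one, Matrix.zero_mul, Matrix.mul_zero,
          add_zero, zero_add, transpose_zero]
        rw [hP']
      set Δs : Matrix (Fin 2 ⊕ Fin (2*n)) (Fin 2 ⊕ Fin (2*n)) ℝ :=
        diagonal (Sum.elim (fun _ : Fin 2 => (1:ℝ)) δ') with hΔsdef
      have hΔs : Δs = fromBlocks 1 0 0 (diagonal δ') := by
        rw [hΔsdef, ← fromBlocks_diagonal, diagonal_one]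
      set Js : Matrix (Fin 2 ⊕ Fin (2*n)) (Fin 2 ⊕ Fin (2*n)) ℝ :=
        fromBlocks J2 0 0 (_root_.J n) with hJs
      have hΔJΔ : Δs * Js * Δs
          = fromBlocks J2 0 0 (diagonal δ' * _root_.J n * diagonal δ') := by
        rw [hΔs, hJs, fromBlocks_multiply, fromBlocks_multiply]
        simp
      have hJJ : Js = (_root_.J (n+1)).submatrix e e := by
        ext x y
        cases x with
        | inl r =>
          have hr := r.isLt
          cases y with
          | inl s =>
            have hs := s.isLt
            simp only [hJs, fromBlocks_apply₁₁, submatrix_apply, J_apply, he_l]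
            fin_cases r <;> fin_cases s <;> norm_num [J2]
          | inr l =>
            have hl := l.isLt
            simp only [hJs, fromBlocks_apply₁₂, submatrix_apply, J_apply, he_l, he_r,
              Matrix.zero_apply]
            split_ifs <;> first | rfl | (exfalso; omega)
        | inr k =>
          have hk := k.isLt
          cases y with
          | inl s =>
            have hs := s.isLt
            simp only [hJs, fromBlocks_apply₂₁, submatrix_apply, J_apply, he_l, he_r,
              Matrix.zero_apply]
            split_ifs <;> first | rfl | (exfalso; omega)
          | inr l =>
            have hl := l.isLt
            simp only [hJs, fromBlocks_apply₂₂, submatrix_apply, J_apply, he_l, he_r]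
            split_ifs <;> first | rfl | (exfalso; omega)
      have hS₁sub : Sh.submatrix e.symm e.symm = S₁ := by
        rw [hShdef, submatrix_submatrix, Equiv.self_comp_symm, submatrix_id_id]
      refine ⟨P₁ * ((P₂ * P₃).submatrix e.symm e.symm),
        Sum.elim (fun _ : Fin 2 => (1:ℝ)) δ' ∘ e.symm, ?_, ?_, ?_⟩
      · rw [Matrix.det_mul, det_submatrix_equiv_self, Matrix.det_mul, hP₂, hP₃,
          det_fromBlocks_zero₂₁, det_fromBlocks_zero₂₁, det_one, one_mul, one_mul]
        simpa using hP₁det.mul hP'det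
      · intro i
        cases h : e.symm i with
        | inl r => simp [h]
        | inr k => simpa [h] using hδ' k
      · have hdiagsub : Δs.submatrix e.symm e.symm
            = diagonal (Sum.elim (fun _ : Fin 2 => (1:ℝ)) δ' ∘ e.symm) := by
          rw [hΔsdef, submatrix_diagonal_equiv]
        have hJsub : Js.submatrix e.symm e.symm = _root_.J (n+1) := by
          rw [hJJ, submatrix_submatrix, Equiv.self_comp_symm, submatrix_id_id]
        calc (P₁ * ((P₂ * P₃).submatrix e.symm e.symm))ᵀ * S
              * (P₁ * ((P₂ * P₃).submatrix e.symm e.symm))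
            = ((P₂ * P₃).submatrix e.symm e.symm)ᵀ * S₁
              * ((P₂ * P₃).submatrix e.symm e.symm) := by
              rw [hS₁def, transpose_mul]
              simp only [Matrix.mul_assoc]
          _ = ((P₂ * P₃)ᵀ * Sh * (P₂ * P₃)).submatrix e.symm e.symm := by
              rw [← hS₁sub, transpose_submatrix, submatrix_mul_equiv, submatrix_mul_equiv]
          _ = (Δs * Js * Δs).submatrix e.symm e.symm := by rw [hQs, hΔJΔ]
          _ = _ := by
              rw [← hdiagsub, ← hJsub, submatrix_mul_equiv, submatrix_mul_equiv]

/-- Lemma A : every skew matrix is of the form Cᵀ J C. -/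
lemma skew_eq_conj_J (n : ℕ) (S : Matrix (Fin (2*n)) (Fin (2*n)) ℝ) (hS : Sᵀ = -S) :
    ∃ C : Matrix (Fin (2*n)) (Fin (2*n)) ℝ, Cᵀ * _root_.J n * C = S := by
  obtain ⟨P, δ, hdet, -, hcan⟩ := skew_canonical n S hS
  have hdetT : IsUnit Pᵀ.det := by rwa [det_transpose]
  refine ⟨diagonal δ * P⁻¹, ?_⟩
  rw [transpose_mul, diagonal_transpose, transpose_nonsing_inv]
  have h1 : Pᵀ⁻¹ * diagonal δ * _root_.J n * (diagonal δ * P⁻¹)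
      = Pᵀ⁻¹ * (diagonal δ * _root_.J n * diagonal δ) * P⁻¹ := by
    simp only [Matrix.mul_assoc]
  rw [h1, ← hcan]
  have h2 : Pᵀ⁻¹ * (Pᵀ * S * P) * P⁻¹ = (Pᵀ⁻¹ * Pᵀ) * S * (P * P⁻¹) := by
    simp only [Matrix.mul_assoc]
  rw [h2, Matrix.nonsing_inv_mul _ hdetT, Matrix.mul_nonsing_inv _ hdet,
    Matrix.one_mul, Matrix.mul_one]

/-- Lemma B : every invertible skew matrix is congruent to J. -/
lemma skew_congruent_J (n : ℕ) (T : Matrix (Fin (2*n)) (Fin (2*n)) ℝ) (hT : Tᵀ = -T)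
    (hTdet : IsUnit T.det) :
    ∃ D : Matrix (Fin (2*n)) (Fin (2*n)) ℝ, Dᵀ * T * D = _root_.J n := by
  obtain ⟨P, δ, hdet, hδ, hcan⟩ := skew_canonical n T hT
  have hδ1 : ∀ i, δ i = 1 := by
    intro i
    rcases hδ i with h0 | h1
    · exfalso
      have hL : IsUnit (Pᵀ * T * P).det := by
        rw [Matrix.det_mul, Matrix.det_mul, det_transpose]
        exact (hdet.mul hTdet).mul hdet
      rw [hcan] at hL
      rw [Matrix.det_mul, Matrix.det_mul, det_diagonal] at hL
      have : ∏ k, δ k = 0 := Finset.prod_eq_zero (Finset.mem_univ i) h0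
      rw [this] at hL
      simp at hL
    · exact h1
  have hdiag : diagonal δ = 1 := by
    have : δ = fun _ => 1 := funext hδ1
    rw [this, diagonal_one]
  rw [hdiag, Matrix.one_mul, Matrix.mul_one] at hcan
  exact ⟨P, hcan⟩

theorem posdef_symplectic_dilation {n : ℕ}
    (A : Matrix (Fin (2*n)) (Fin (2*n)) ℝ) (hA : A.PosDef) :
    ∃ (B C D : Matrix (Fin (2*n)) (Fin (2*n)) ℝ),
      (Matrix.fromBlocks A B C D)ᵀ * Matrix.fromBlocks (J n) 0 0 (J n) *
        Matrix.fromBlocks A B C D = Matrix.fromBlocks (J n) 0 0 (J n) := by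
  have hAT : Aᵀ = A := by
    have := hA.1
    rwa [Matrix.IsHermitian, conjTranspose_eq_transpose_of_trivial] at this
  have hAdet : IsUnit A.det := isUnit_iff_ne_zero.mpr (ne_of_gt hA.det_pos)
  set Jn := _root_.J n with hJn
  -- the skew matrix J - AᵀJA
  have hSskew : (Jn - Aᵀ * Jn * A)ᵀ = -(Jn - Aᵀ * Jn * A) := by
    rw [transpose_sub, transpose_mul, transpose_mul, transpose_transpose, hJn,
      Jtrans_neg]
    simp only [Matrix.mul_neg, Matrix.neg_mul, Matrix.mul_assoc]
    abel
  obtain ⟨C, hC⟩ := skew_eq_conj_J n _ hSskew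
  set W := Jn * A⁻¹ * Cᵀ * Jn with hW
  have hkey : Aᵀ * Jn * W = -(Cᵀ * Jn) := by
    rw [hW, hAT]
    calc A * Jn * (Jn * A⁻¹ * Cᵀ * Jn)
        = A * (Jn * Jn) * A⁻¹ * Cᵀ * Jn := by simp only [Matrix.mul_assoc]
      _ = -(A * A⁻¹ * Cᵀ * Jn) := by
          rw [hJn, JmulJ]
          simp only [Matrix.mul_neg, Matrix.neg_mul, Matrix.mul_one]
      _ = -(Cᵀ * Jn) := by rw [Matrix.mul_nonsing_inv _ hAdet, Matrix.one_mul]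
  set T := Wᵀ * Jn * W + Jn with hT
  have hTskew : Tᵀ = -T := by
    rw [hT]
    simp only [transpose_add, transpose_mul, transpose_transpose, hJn, Jtrans_neg,
      Matrix.mul_neg, Matrix.neg_mul, Matrix.mul_assoc, neg_neg]
    abel
  -- the big matrix [A W; C 1] is invertible
  have hM₀ : (fromBlocks A W C (1 : Matrix (Fin (2*n)) (Fin (2*n)) ℝ)).det ≠ 0 := by
    intro hdet0
    obtain ⟨v, hv0, hv⟩ := (Matrix.exists_mulVec_eq_zero_iff).mpr hdet0
    rw [fromBlocks_mulVec] at hv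
    set x := v ∘ Sum.inl with hx
    set y := v ∘ Sum.inr with hy
    have e1 : A *ᵥ x + W *ᵥ y = 0 := funext fun i => congrFun hv (Sum.inl i)
    have e2 : C *ᵥ x + (1 : Matrix (Fin (2*n)) (Fin (2*n)) ℝ) *ᵥ y = 0 :=
      funext fun i => congrFun hv (Sum.inr i)
    rw [one_mulVec] at e2
    have hy : y = -(C *ᵥ x) := eq_neg_of_add_eq_zero_right e2
    -- derive (J n) *ᵥ x = 0
    have e3 : (Aᵀ * Jn * A) *ᵥ x + (Aᵀ * Jn * W) *ᵥ y = 0 := by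
      have := congrArg (fun w => (Aᵀ * Jn) *ᵥ w) e1
      simpa [Matrix.mulVec_add, Matrix.mulVec_mulVec, Matrix.mulVec_zero,
        Matrix.mul_assoc] using this
    rw [hkey, hy] at e3
    have e4 : (Aᵀ * Jn * A) *ᵥ x + (Cᵀ * Jn * C) *ᵥ x = 0 := by
      have h' : (-(Cᵀ * Jn)) *ᵥ (-(C *ᵥ x)) = (Cᵀ * Jn * C) *ᵥ x := by
        rw [Matrix.mulVec_neg, Matrix.neg_mulVec, neg_neg, Matrix.mulVec_mulVec]
      rw [h'] at e3
      exact e3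
    have e5 : Jn *ᵥ x = 0 := by
      have : (Aᵀ * Jn * A + Cᵀ * Jn * C) *ᵥ x = 0 := by
        rw [Matrix.add_mulVec]; exact e4
      have hsum : Aᵀ * Jn * A + Cᵀ * Jn * C = Jn := by
        rw [hC]; abel
      rwa [hsum] at this
    have hx0 : x = 0 := by
      have h6 : Jn *ᵥ (Jn *ᵥ x) = 0 := by rw [e5]; exact Matrix.mulVec_zero _
      rw [Matrix.mulVec_mulVec, hJn, JmulJ, Matrix.neg_mulVec, Matrix.one_mulVec] at h6
      simpa using congrArg Neg.neg h6
    apply hv0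
    funext s
    cases s with
    | inl i => exact congrFun hx0 i
    | inr i =>
      have : y = 0 := by rw [hy, hx0, Matrix.mulVec_zero, neg_zero]
      exact congrFun this i
  -- T is invertible
  have hTdet : IsUnit T.det := by
    rw [isUnit_iff_ne_zero]
    intro hdet0
    obtain ⟨v, hv0, hv⟩ := (Matrix.exists_mulVec_eq_zero_iff).mpr hdet0
    have hMT : (fromBlocks A W C (1 : Matrix (Fin (2*n)) (Fin (2*n)) ℝ))ᵀ.det ≠ 0 := by
      rwa [Matrix.det_transpose]
    apply hMT
    rw [← Matrix.exists_mulVec_eq_zero_iff]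
    refine ⟨Sum.elim (Jn *ᵥ (W *ᵥ v)) (Jn *ᵥ v), ?_, ?_⟩
    · intro hz
      have hJv : Jn *ᵥ v = 0 := funext fun i => congrFun hz (Sum.inr i)
      have h6 : Jn *ᵥ (Jn *ᵥ v) = 0 := by rw [hJv]; exact Matrix.mulVec_zero _
      rw [Matrix.mulVec_mulVec, hJn, JmulJ, Matrix.neg_mulVec, Matrix.one_mulVec] at h6
      exact hv0 (by simpa using congrArg Neg.neg h6)
    · rw [fromBlocks_transpose, fromBlocks_mulVec]
      have hc1 : Aᵀ *ᵥ (Jn *ᵥ (W *ᵥ v)) + Cᵀ *ᵥ (Jn *ᵥ v) = 0 := by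
        have h7 : (Aᵀ * Jn * W) *ᵥ v + (Cᵀ * Jn) *ᵥ v = 0 := by
          rw [hkey, Matrix.neg_mulVec]
          abel
        simpa [Matrix.mulVec_mulVec, Matrix.mul_assoc] using h7
      have hc2 : Wᵀ *ᵥ (Jn *ᵥ (W *ᵥ v)) + (1 : Matrix (Fin (2*n)) (Fin (2*n)) ℝ) *ᵥ (Jn *ᵥ v) = 0 := by
        have h8 : T *ᵥ v = 0 := hv
        rw [hT, Matrix.add_mulVec] at h8
        simpa [Matrix.one_mulVec, Matrix.mulVec_mulVec, Matrix.mul_assoc] using h8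
      funext s
      cases s with
      | inl i =>
        have : (Sum.elim (Jn *ᵥ (W *ᵥ v)) (Jn *ᵥ v)) ∘ Sum.inl = Jn *ᵥ (W *ᵥ v) := rfl
        simpa [this] using congrFun hc1 i
      | inr i =>
        simpa using congrFun hc2 i
  -- final assembly
  obtain ⟨D, hD⟩ := skew_congruent_J n T hTskew hTdet
  refine ⟨W * D, C, D, ?_⟩
  rw [fromBlocks_transpose, fromBlocks_multiply, fromBlocks_multiply,
    fromBlocks_inj]
  have hE2core : Aᵀ * Jn * W + Cᵀ * Jn = 0 := by rw [hkey]; abel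
  have hWT : Wᵀ = Jn * (C * (A⁻¹ * Jn)) := by
    rw [hW]
    simp only [transpose_mul, transpose_transpose, hJn, Jtrans_neg,
      transpose_nonsing_inv, hAT, Matrix.neg_mul, Matrix.mul_neg, neg_neg,
      Matrix.mul_assoc]
  have hE3core : Wᵀ * (Jn * A) + Jn * C = 0 := by
    have h9 : Wᵀ * (Jn * A) = -(Jn * C) := by
      rw [hWT]
      calc Jn * (C * (A⁻¹ * Jn)) * (Jn * A)
          = Jn * (C * (A⁻¹ * ((Jn * Jn) * A))) := by simp only [Matrix.mul_assoc]
        _ = -(Jn * (C * (A⁻¹ * A))) := by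
            rw [hJn, JmulJ]
            simp only [Matrix.neg_mul, Matrix.mul_neg, Matrix.one_mul]
        _ = -(Jn * C) := by rw [Matrix.nonsing_inv_mul _ hAdet, Matrix.mul_one]
    rw [h9]
    abel
  refine ⟨?_, ?_, ?_, ?_⟩ <;>
    simp only [Matrix.mul_zero, Matrix.zero_mul, add_zero, zero_add, transpose_mul,
      Matrix.mul_add, Matrix.add_mul, Matrix.mul_assoc]
  · have hC' : Cᵀ * (Jn * C) = Jn - Aᵀ * (Jn * A) := by
      simpa only [Matrix.mul_assoc] using hC
    rw [hC']
    abel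
  · have hE2' : Aᵀ * (Jn * W) + Cᵀ * Jn = 0 := by
      simpa only [Matrix.mul_assoc] using hE2core
    have : Aᵀ * (Jn * (W * D)) + Cᵀ * (Jn * D) = (Aᵀ * (Jn * W) + Cᵀ * Jn) * D := by
      simp only [Matrix.add_mul, Matrix.mul_assoc]
    rw [this, hE2', Matrix.zero_mul]
  · rw [← Matrix.mul_add, hE3core, Matrix.mul_zero]
  · have h4 : Wᵀ * (Jn * (W * D)) + Jn * D = T * D := by
      rw [hT]
      simp only [Matrix.add_mul, Matrix.mul_assoc]
    rw [← Matrix.mul_add, h4, ← Matrix.mul_assoc, hD, hJn]
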